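/- Let M = (E, I) be a matroid with nonnegative weight function w and let k be a positive integer. Let F ⊆ E, let X ∈ I with |X| ≤ k, and let x ∈ F ∩ X. Let R be the output of the greedy algorithm that processes the elements of F in non-increasing order of weight and adds an element to the current set whenever independence is preserved and the size stays at most k. Then R contains an element y such that y ∉ X − x, w(y) ≥ w(x), and X − x + y ∈ I. -/

import Mathlib

-- `Greedy(M, F, k)`: process the elements of a list (sorted in non-increasing order
-- of weight), adding an element whenever independence in `M` is preserved and the size
-- stays at most `k`.
open Classical in
noncomputable def greedy {α : Type*} [DecidableEq α] (M : Matroid α) (k : ℕ) :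
    List α → Finset α → Finset α
  | [], I => I
  | f :: rest, I =>
    if M.Indep (↑(insert f I) : Set α) ∧ (insert f I).card ≤ k then
      greedy M k rest (insert f I)
    else greedy M k rest I

lemma greedy_subset {α : Type*} [DecidableEq α] (M : Matroid α) (k : ℕ) :
    ∀ (l : List α) (I : Finset α), I ⊆ greedy M k l I
  | [], I => by simp [greedy]
  | f :: rest, I => by
    rw [greedy]
    split
    · exact (Finset.subset_insert f I).trans (greedy_subset M k rest _)
    · exact greedy_subset M k rest I

/-- Key exchange lemma: if `x` is rejected by greedy when the current set is `I`,
then some `y ∈ I` works. -/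
lemma exchange_exists {α : Type*} [DecidableEq α] (M : Matroid α) (k : ℕ)
    (X : Finset α) (hX : M.Indep (↑X : Set α)) (hXk : X.card ≤ k)
    (x : α) (hxX : x ∈ X)
    (I : Finset α) (hI : M.Indep (↑I : Set α)) (hxI : x ∉ I)
    (hfail : ¬ (M.Indep (↑(insert x I) : Set α) ∧ (insert x I).card ≤ k)) :
    ∃ y ∈ I, y ∉ X.erase x ∧ M.Indep (↑(insert y (X.erase x)) : Set α) := by
  have hxE : x ∈ M.E := hX.subset_ground hxX
  have hEr : M.Indep (↑(X.erase x) : Set α) :=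
    hX.subset (by exact_mod_cast Finset.coe_subset.mpr (Finset.erase_subset x X))
  push_neg at hfail
  by_cases hind : M.Indep (↑(insert x I) : Set α)
  · -- cardinality failure: |I| ≥ k
    have hcard : k < (insert x I).card := lt_of_not_ge (fun h => by
      have := hfail hind; omega)
    have hIk : k ≤ I.card := by
      rw [Finset.card_insert_of_notMem hxI] at hcard; omega
    have hlt : (↑(X.erase x) : Set α).encard < (↑I : Set α).encard := by
      rw [Set.encard_coe_eq_coe_finsetCard, Set.encard_coe_eq_coe_finsetCard]
      have h1 : 1 ≤ X.card := Finset.card_pos.mpr ⟨x, hxX⟩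
      have := Finset.card_erase_of_mem hxX
      exact_mod_cast (by omega : (X.erase x).card < I.card)
    obtain ⟨y, hy, hyi⟩ := hEr.augment hI hlt
    refine ⟨y, by exact_mod_cast hy.1, fun h => hy.2 (by exact_mod_cast h), ?_⟩
    simpa using hyi
  · -- independence failure
    by_contra hcon
    push_neg at hcon
    have hIcl : (↑I : Set α) ⊆ M.closure (↑(X.erase x)) := by
      intro y hy
      by_cases hyX : y ∈ X.erase x
      · exact (M.subset_closure _ hEr.subset_ground) (by exact_mod_cast hyX)
      · have hdep := hcon y (by exact_mod_cast hy) hyX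
        rw [Finset.coe_insert] at hdep
        have hyE : y ∈ M.E := hI.subset_ground hy
        have hni := (hEr.insert_indep_iff (e := y)).not.mp hdep
        push_neg at hni
        by_contra hny
        exact hni.1 ⟨hyE, hny⟩
    have hxcl : x ∈ M.closure (↑I : Set α) := by
      rw [Finset.coe_insert] at hind
      have hni := (hI.insert_indep_iff (e := x)).not.mp hind
      push_neg at hni
      by_contra hnx
      exact hni.1 ⟨hxE, hnx⟩
    have : x ∈ M.closure (↑(X.erase x)) :=
      M.closure_subset_closure_of_subset_closure hIcl hxcl
    have hne : x ∉ M.closure ((↑X : Set α) \ {x}) :=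
      hX.notMem_closure_sdiff_of_mem (by exact_mod_cast hxX)
    rw [Finset.coe_erase] at this
    exact hne this

lemma greedy_main {α : Type*} [DecidableEq α] (M : Matroid α) (w : α → ℝ) (k : ℕ)
    (X : Finset α) (hX : M.Indep (↑X : Set α)) (hXk : X.card ≤ k)
    (x : α) (hxX : x ∈ X) :
    ∀ (l : List α), l.Nodup → l.Pairwise (fun a b => w b ≤ w a) → x ∈ l →
    ∀ (I : Finset α), M.Indep (↑I : Set α) → x ∉ I → (∀ a ∈ I, w x ≤ w a) →
    ∃ y ∈ greedy M k l I, y ∉ X.erase x ∧ w x ≤ w y ∧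
      M.Indep (↑(insert y (X.erase x)) : Set α) := by
  intro l
  induction l with
  | nil => intro _ _ h; exact absurd h List.not_mem_nil
  | cons f rest ih =>
    intro hnd hsort hx I hI hxI hwI
    rw [List.pairwise_cons] at hsort
    rw [List.nodup_cons] at hnd
    by_cases hxf : x = f
    · subst hxf
      rw [greedy]
      split
      · refine ⟨x, greedy_subset M k rest _ (Finset.mem_insert_self x I),
          Finset.notMem_erase x X, le_refl _, ?_⟩
        rw [Finset.insert_erase hxX]
        exact hX
      · rename_i hcond
        obtain ⟨y, hyI, hyX, hyind⟩ := exchange_exists M k X hX hXk x hxX I hI hxI hcond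
        exact ⟨y, greedy_subset M k rest I hyI, hyX, hwI y hyI, hyind⟩
    · have hxr : x ∈ rest := (List.mem_cons.mp hx).resolve_left hxf
      have hwxf : w x ≤ w f := hsort.1 x hxr
      rw [greedy]
      split
      · rename_i hcond
        refine ih hnd.2 hsort.2 hxr (insert f I) hcond.1 ?_ ?_
        · simp only [Finset.mem_insert, not_or]
          exact ⟨hxf, hxI⟩
        · intro a ha
          rcases Finset.mem_insert.mp ha with h | h
          · exact h ▸ hwxf
          · exact hwI a h
      · exact ih hnd.2 hsort.2 hxr I hI hxI hwI

/-- If `X` is independent with `|X| ≤ k` and `x ∈ F ∩ X`, then the output of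
the greedy algorithm on `F` contains `y ∉ X − x` with `w(y) ≥ w(x)` and `X − x + y`
independent. The set `F` is given as a duplicate-free list sorted in non-increasing weight
order. -/
theorem stmt_1 {α : Type*} [DecidableEq α] (M : Matroid α) (w : α → ℝ)
    (hw : ∀ e, 0 ≤ w e) (k : ℕ) (hk : 0 < k)
    (l : List α) (hnd : l.Nodup) (hsort : l.Pairwise (fun a b => w b ≤ w a))
    (X : Finset α) (hX : M.Indep (↑X : Set α)) (hXk : X.card ≤ k)
    (x : α) (hxF : x ∈ l) (hxX : x ∈ X) :
    ∃ y ∈ greedy M k l ∅, y ∉ X.erase x ∧ w x ≤ w y ∧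
      M.Indep (↑(insert y (X.erase x)) : Set α) := by
  exact greedy_main M w k X hX hXk x hxX l hnd hsort hxF ∅ (by simp)
    (Finset.notMem_empty x) (by simp)
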